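/- Let R > 0 and let e : (0,∞) → ℝ be differentiable with e′(P) ≠ 0 for all P > 0. Define Q(T,P) = exp(−e(P)/(R·T)) for T,P > 0. Then the partial derivative of Q with respect to T equals (e(P)/(R·T²))·Q(T,P) and the partial derivative with respect to P equals −(e′(P)/(R·T))·Q(T,P). Moreover, if F : (0,∞) → ℝ is differentiable with F′(P) = e(P)/e′(P) for all P > 0, then along any differentiable curve (T(t),P(t)) with T(t),P(t) > 0 solving the gradient flow T′ = ∂Q/∂T, P′ = ∂Q/∂P, the quantity F(P(t)) + T(t)²/2 is constant. -/

import Mathlib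

/-- Case `ε = 0` with error term: for `Q(T,P) = exp(−e(P)/(R·T))` with
`e′(P) ≠ 0`, the partial derivatives are `∂Q/∂T = (e(P)/(R·T²))·Q` and
`∂Q/∂P = −(e′(P)/(R·T))·Q`; moreover if `F′ = e/e′`, then along any
gradient-flow curve of `Q` the quantity `F(P) + T²/2` is constant. -/
theorem maximal_reaction_paths_eps_zero
    (R : ℝ) (hR : 0 < R)
    (e e' : ℝ → ℝ) (he : ∀ P > (0:ℝ), HasDerivAt e (e' P) P)
    (hne : ∀ P > (0:ℝ), e' P ≠ 0)
    (Q : ℝ → ℝ → ℝ)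
    (hQ : ∀ T P, Q T P = Real.exp (-e P / (R * T)))
    (F : ℝ → ℝ)
    (hF : ∀ P > (0:ℝ), HasDerivAt F (e P / e' P) P)
    (I : Set ℝ) (hI : I.OrdConnected)
    (T P : ℝ → ℝ)
    (hpos : ∀ t ∈ I, 0 < T t ∧ 0 < P t)
    (hT : ∀ t ∈ I, HasDerivAt T (deriv (fun s => Q s (P t)) (T t)) t)
    (hP : ∀ t ∈ I, HasDerivAt P (deriv (fun s => Q (T t) s) (P t)) t) :
    (∀ T > (0:ℝ), ∀ P > (0:ℝ),
      HasDerivAt (fun s => Q s P) ((e P / (R * T ^ 2)) * Q T P) T ∧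
      HasDerivAt (fun s => Q T s) (-(e' P / (R * T)) * Q T P) P) ∧
    (∀ t ∈ I, ∀ s ∈ I,
      F (P t) + T t ^ 2 / 2 = F (P s) + T s ^ 2 / 2) := by
  have key : ∀ T > (0:ℝ), ∀ P > (0:ℝ),
      HasDerivAt (fun s => Q s P) ((e P / (R * T ^ 2)) * Q T P) T ∧
      HasDerivAt (fun s => Q T s) (-(e' P / (R * T)) * Q T P) P := by
    intro T hT0 P hP0
    have hRT : R * T ≠ 0 := by positivity
    constructor
    · have h1 : HasDerivAt (fun s : ℝ => R * s) R T := by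
        simpa using (hasDerivAt_id T).const_mul R
      have h2 : HasDerivAt (fun s : ℝ => -e P / (R * s))
          ((0 * (R * T) - (-e P) * R) / (R * T) ^ 2) T :=
        (hasDerivAt_const T (-e P)).div h1 hRT
      have h3 := h2.exp
      have hfun : (fun s => Q s P) = fun s => Real.exp (-e P / (R * s)) :=
        funext fun s => hQ s P
      rw [hfun, hQ]
      convert h3 using 1
      field_simp
      ring
    · have h2 : HasDerivAt (fun s : ℝ => -e s / (R * T)) (-(e' P) / (R * T)) P :=
        ((he P hP0).neg).div_const _
      have h3 := h2.exp
      have hfun : (fun s => Q T s) = fun s => Real.exp (-e s / (R * T)) :=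
        funext fun s => hQ T s
      rw [hfun, hQ]
      convert h3 using 1
      ring
  refine ⟨key, ?_⟩
  set g : ℝ → ℝ := fun t => F (P t) + T t ^ 2 / 2 with hg
  have hderiv : ∀ t ∈ I, HasDerivAt g 0 t := by
    intro t ht
    obtain ⟨hT0, hP0⟩ := hpos t ht
    obtain ⟨k1, k2⟩ := key (T t) hT0 (P t) hP0
    have hTd : HasDerivAt T ((e (P t) / (R * T t ^ 2)) * Q (T t) (P t)) t := by
      have := hT t ht; rwa [k1.deriv] at this
    have hPd : HasDerivAt P (-(e' (P t) / (R * T t)) * Q (T t) (P t)) t := by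
      have := hP t ht; rwa [k2.deriv] at this
    have hFd : HasDerivAt (fun u => F (P u))
        ((e (P t) / e' (P t)) * (-(e' (P t) / (R * T t)) * Q (T t) (P t))) t :=
      (hF (P t) hP0).comp t hPd
    have hSq : HasDerivAt (fun u => T u ^ 2 / 2)
        ((2 * T t ^ 1 * ((e (P t) / (R * T t ^ 2)) * Q (T t) (P t))) / 2) t :=
      (hTd.pow 2).div_const 2
    have := hFd.add hSq
    convert this using 1
    case e'_4 => rfl
    case e'_5 => rfl
    case e'_8 => rfl
    have h1 := hne (P t) hP0
    have h2 : T t ≠ 0 := ne_of_gt hT0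
    have h3 : R ≠ 0 := ne_of_gt hR
    field_simp
    ring
  intro t ht s hs
  have hconv : Convex ℝ I := convex_iff_ordConnected.mpr hI
  have hd : ∀ x ∈ I, HasDerivWithinAt g ((fun _ : ℝ => (0:ℝ)) x) I x :=
    fun x hx => (hderiv x hx).hasDerivWithinAt
  have hb : ∀ x ∈ I, ‖(fun _ : ℝ => (0:ℝ)) x‖ ≤ 0 := by simp
  have := hconv.norm_image_sub_le_of_norm_hasDerivWithin_le hd hb hs ht
  simp only [zero_mul] at this
  have : g t = g s := by
    have h := norm_sub_eq_zero_iff.mp (le_antisymm this (norm_nonneg _))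
    exact h
  simpa [hg] using this
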